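/- Let X and Y be mm-spaces. Then X ≻ Y (X dominates Y in the Lipschitz order) if and only if X ≻₀ Y (X dominates Y with additive error 0). -/

import Mathlib

open MeasureTheory Topology Filter Set Metric ENNReal

noncomputable section

/-- The support of a Borel measure: points all of whose open neighborhoods have
positive measure. -/
def msupport {X : Type*} [TopologicalSpace X] [MeasurableSpace X] (μ : Measure X) : Set X :=
  {x | ∀ U : Set X, IsOpen U → x ∈ U → 0 < μ U}

/-- `dis_≻ S = sup { d_Y(y,y') − d_X(x,x') : (x,y),(x',y') ∈ S }`, with `dis_≻ ∅ = 0`. -/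
def disSucc {X Y : Type*} [MetricSpace X] [MetricSpace Y] (S : Set (X × Y)) : ℝ≥0∞ :=
  ⨆ p ∈ S, ⨆ q ∈ S, ENNReal.ofReal (dist p.2 q.2 - dist p.1 q.1)

/-- `dis S = sup { |d_X(x,x') − d_Y(y,y')| : (x,y),(x',y') ∈ S }`, with `dis ∅ = 0`. -/
def disBox {X Y : Type*} [MetricSpace X] [MetricSpace Y] (S : Set (X × Y)) : ℝ≥0∞ :=
  ⨆ p ∈ S, ⨆ q ∈ S, ENNReal.ofReal |dist p.1 q.1 - dist p.2 q.2|

/-- `π` is a coupling of `μ` and `ν`. -/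
def IsCoupling {X Y : Type*} [MeasurableSpace X] [MeasurableSpace Y]
    (π : Measure (X × Y)) (μ : Measure X) (ν : Measure Y) : Prop :=
  IsProbabilityMeasure π ∧ π.map Prod.fst = μ ∧ π.map Prod.snd = ν

/-- `X ≻_ε Y`: the Lipschitz order with additive error `ε`. -/
def LipDomE {X Y : Type*} [MetricSpace X] [MetricSpace Y]
    [MeasurableSpace X] [MeasurableSpace Y]
    (μ : Measure X) (ν : Measure Y) (ε : ℝ) : Prop :=
  ∃ π : Measure (X × Y), IsCoupling π μ ν ∧
    ∃ S : Set (X × Y), IsClosed S ∧ disSucc S ≤ ENNReal.ofReal ε ∧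
      ENNReal.ofReal (1 - ε) ≤ π S

/-- `X ≻ Y`: the Lipschitz order. There is a 1-Lipschitz map
`f : supp m_X → supp m_Y` with `f_* m_X = m_Y`. -/
def LipOrder {X Y : Type*} [MetricSpace X] [MetricSpace Y]
    [MeasurableSpace X] [MeasurableSpace Y]
    (μ : Measure X) (ν : Measure Y) : Prop :=
  ∃ f : msupport μ → msupport ν, LipschitzWith 1 f ∧
    ∀ A : Set Y, MeasurableSet A →
      μ (Subtype.val '' ((fun x => (f x : Y)) ⁻¹' A)) = ν A

/-- The box metric. -/
def boxDist {X Y : Type*} [MetricSpace X] [MetricSpace Y]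
    [MeasurableSpace X] [MeasurableSpace Y]
    (μ : Measure X) (ν : Measure Y) : ℝ≥0∞ :=
  ⨅ (S : Set (X × Y)) (_ : IsClosed S) (π : Measure (X × Y)) (_ : IsCoupling π μ ν),
    max (disBox S) (1 - π S)

/-- The unilateral box metric `□_≻(X,Y) = inf { ε ≥ 0 : X ≻_ε Y }`. -/
def ubox {X Y : Type*} [MetricSpace X] [MetricSpace Y]
    [MeasurableSpace X] [MeasurableSpace Y]
    (μ : Measure X) (ν : Measure Y) : ℝ :=
  sInf {ε : ℝ | 0 ≤ ε ∧ LipDomE μ ν ε}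

/-- The Prokhorov metric
`d_P(μ,ν) = inf { ε > 0 : μ(U_ε(A)) ≥ ν(A) − ε for every Borel A }`. -/
def prokDist {Y : Type*} [MetricSpace Y] [MeasurableSpace Y] (μ ν : Measure Y) : ℝ :=
  sInf {ε : ℝ | 0 < ε ∧ ∀ A : Set Y, MeasurableSet A →
    ν A ≤ μ (Metric.thickening ε A) + ENNReal.ofReal ε}

/-- `f : supp m_X → supp m_Y` is 1-Lipschitz up to an additive error `ε`. -/
def LipUpTo {X Y : Type*} [MetricSpace X] [MetricSpace Y]
    [MeasurableSpace X] [MeasurableSpace Y]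
    (μ : Measure X) (ν : Measure Y) (f : msupport μ → msupport ν) (ε : ℝ) : Prop :=
  ∃ X₀ : Set X, MeasurableSet X₀ ∧ X₀ ⊆ msupport μ ∧
    ENNReal.ofReal (1 - ε) ≤ μ X₀ ∧
    ∀ x x' : msupport μ, (x : X) ∈ X₀ → (x' : X) ∈ X₀ →
      dist (f x : Y) (f x' : Y) ≤ dist (x : X) (x' : X) + ε

/-- `X ≻^{KY}_ε Y`: there is a Borel measurable map `f : supp m_X → supp m_Y`
which is 1-Lipschitz up to `ε` and satisfies `d_P(f_* m_X, m_Y) ≤ ε`. -/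
def KYDom {X Y : Type*} [MetricSpace X] [MetricSpace Y]
    [MeasurableSpace X] [MeasurableSpace Y]
    (μ : Measure X) (ν : Measure Y) (ε : ℝ) : Prop :=
  ∃ f : msupport μ → msupport ν, Measurable f ∧ LipUpTo μ ν f ε ∧
    prokDist (Measure.map (fun x => (f x : Y)) (Measure.comap Subtype.val μ)) ν ≤ ε


lemma isClosed_msupport {X : Type*} [TopologicalSpace X] [MeasurableSpace X] (μ : Measure X) :
    IsClosed (msupport μ) := by
  rw [← isOpen_compl_iff, isOpen_iff_mem_nhds]
  intro x hx
  simp only [msupport, mem_compl_iff, mem_setOf_eq, not_forall] at hx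
  obtain ⟨U, hU, hxU, hμU⟩ := hx
  push_neg at hμU
  filter_upwards [hU.mem_nhds hxU] with y hy
  simp only [msupport, mem_compl_iff, mem_setOf_eq, not_forall]
  exact ⟨U, hU, hy, by simpa using le_antisymm hμU zero_le⟩

lemma measure_compl_msupport {X : Type*} [TopologicalSpace X]
    [SecondCountableTopology X] [MeasurableSpace X] [BorelSpace X]
    (μ : Measure X) : μ (msupport μ)ᶜ = 0 := by
  obtain ⟨B, hBc, -, hB⟩ := TopologicalSpace.exists_countable_basis X
  have hsub : (msupport μ)ᶜ ⊆ ⋃₀ {U ∈ B | μ U = 0} := by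
    intro x hx
    simp only [msupport, mem_compl_iff, mem_setOf_eq, not_forall] at hx
    obtain ⟨U, hU, hxU, hμU⟩ := hx
    push_neg at hμU
    have hμU0 : μ U = 0 := le_antisymm hμU zero_le
    obtain ⟨V, hVB, hxV, hVU⟩ := hB.mem_nhds_iff.1 (hU.mem_nhds hxU)
    exact ⟨V, ⟨hVB, le_antisymm ((measure_mono hVU).trans hμU0.le) zero_le⟩, hxV⟩
  refine measure_mono_null hsub ?_
  exact (measure_sUnion_null_iff (hBc.mono (sep_subset _ _))).2 fun U hU => hU.2

lemma disSucc_pointwise {X Y : Type*} [MetricSpace X] [MetricSpace Y] {S : Set (X × Y)}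
    (h : disSucc S ≤ ENNReal.ofReal 0) :
    ∀ p ∈ S, ∀ q ∈ S, dist p.2 q.2 ≤ dist p.1 q.1 := by
  intro p hp q hq
  have h1 : ENNReal.ofReal (dist p.2 q.2 - dist p.1 q.1) ≤ ENNReal.ofReal 0 := by
    refine le_trans ?_ h
    exact le_iSup₂_of_le p hp (le_iSup₂_of_le q hq le_rfl)
  simp only [ENNReal.ofReal_zero, nonpos_iff_eq_zero, ENNReal.ofReal_eq_zero] at h1
  linarith

private theorem lipOrder_aux_forward {X Y : Type*} [MetricSpace X] [CompleteSpace X]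
    [TopologicalSpace.SeparableSpace X] [MeasurableSpace X] [BorelSpace X]
    [MetricSpace Y] [CompleteSpace Y] [TopologicalSpace.SeparableSpace Y]
    [MeasurableSpace Y] [BorelSpace Y]
    (μ : Measure X) (ν : Measure Y) [IsProbabilityMeasure μ] [IsProbabilityMeasure ν] :
    LipOrder μ ν → LipDomE μ ν 0 := by
  rintro ⟨f, hf, hpush⟩
  have hmS : MeasurableSet (msupport μ) := (isClosed_msupport μ).measurableSet
  have he : MeasurableEmbedding (Subtype.val : msupport μ → X) :=
    MeasurableEmbedding.subtype_coe hmS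
  set κ : Measure (msupport μ) := Measure.comap Subtype.val μ with hκ
  have hκapp : ∀ s : Set (msupport μ), κ s = μ (Subtype.val '' s) := fun s => he.comap_apply μ s
  have hsuppfull : μ (msupport μ) = 1 := by
    have h0 := measure_add_measure_compl (μ := μ) hmS
    rw [measure_compl_msupport, add_zero, measure_univ] at h0
    exact h0
  have hκprob : IsProbabilityMeasure κ := by
    constructor
    rw [hκapp, image_univ, Subtype.range_coe, hsuppfull]
  set g : msupport μ → X × Y := fun x => ((x : X), (f x : Y)) with hg
  have hgc : Continuous g :=
    continuous_subtype_val.prodMk (continuous_subtype_val.comp hf.continuous)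
  have hgm : Measurable g := hgc.measurable
  set π : Measure (X × Y) := κ.map g with hπ
  have hπprob : IsProbabilityMeasure π := Measure.isProbabilityMeasure_map hgm.aemeasurable
  refine ⟨π, ⟨hπprob, ?_, ?_⟩, closure (range g), isClosed_closure, ?_, ?_⟩
  · rw [hπ, Measure.map_map measurable_fst hgm]
    have : (Prod.fst ∘ g) = (Subtype.val : msupport μ → X) := rfl
    rw [this, he.map_comap, Subtype.range_coe]
    exact Measure.restrict_eq_self_of_ae_mem
      (by rw [ae_iff]; exact measure_compl_msupport μ)
  · rw [hπ, Measure.map_map measurable_snd hgm]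
    have hgsm : Measurable fun x : msupport μ => (f x : Y) :=
      (continuous_subtype_val.comp hf.continuous).measurable
    have hcomp : (Prod.snd ∘ g) = fun x : msupport μ => (f x : Y) := rfl
    rw [hcomp]
    refine Measure.ext fun A hA => ?_
    rw [Measure.map_apply hgsm hA]
    show κ ((fun x => (f x : Y)) ⁻¹' A) = ν A
    rw [hκapp]
    exact hpush A hA
  · -- disSucc
    have key : ∀ p ∈ closure (range g), ∀ q ∈ closure (range g),
        dist p.2 q.2 ≤ dist p.1 q.1 := by
      have hcl : closure (range g) ×ˢ closure (range g) ⊆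
          {pq : (X × Y) × (X × Y) | dist pq.1.2 pq.2.2 ≤ dist pq.1.1 pq.2.1} := by
        rw [← closure_prod_eq]
        refine closure_minimal ?_ (isClosed_le (by fun_prop) (by fun_prop))
        rintro ⟨p, q⟩ ⟨⟨x, rfl⟩, ⟨x', rfl⟩⟩
        simpa [hg, Subtype.dist_eq] using hf.dist_le_mul x x'
      intro p hp q hq
      exact hcl (Set.mk_mem_prod hp hq)
    refine iSup₂_le fun p hp => iSup₂_le fun q hq => ?_
    simp only [ENNReal.ofReal_zero, nonpos_iff_eq_zero, ENNReal.ofReal_eq_zero]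
    linarith [key p hp q hq]
  · rw [hπ, Measure.map_apply hgm isClosed_closure.measurableSet]
    have hpre : g ⁻¹' closure (range g) = univ :=
      eq_univ_of_forall fun x => subset_closure ⟨x, rfl⟩
    rw [hpre, measure_univ]
    simp

private theorem lipOrder_aux_backward {X Y : Type*} [MetricSpace X] [CompleteSpace X]
    [TopologicalSpace.SeparableSpace X] [MeasurableSpace X] [BorelSpace X]
    [MetricSpace Y] [CompleteSpace Y] [TopologicalSpace.SeparableSpace Y]
    [MeasurableSpace Y] [BorelSpace Y]
    (μ : Measure X) (ν : Measure Y) [IsProbabilityMeasure μ] [IsProbabilityMeasure ν] :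
    LipDomE μ ν 0 → LipOrder μ ν := by
  rintro ⟨π, ⟨hπprob, hfst, hsnd⟩, S, hScl, hdis, hπS⟩
  have hmSμ : MeasurableSet (msupport μ) := (isClosed_msupport μ).measurableSet
  have hmSν : MeasurableSet (msupport ν) := (isClosed_msupport ν).measurableSet
  set S' : Set (X × Y) := S ∩ (msupport μ ×ˢ msupport ν) with hS'def
  have hS'cl : IsClosed S' := hScl.inter ((isClosed_msupport μ).prod (isClosed_msupport ν))
  have hS'm : MeasurableSet S' := hS'cl.measurableSet
  have hπSone : π S = 1 := le_antisymm prob_le_one (by simpa using hπS)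
  have hrectc : π ((msupport μ ×ˢ msupport ν)ᶜ) = 0 := by
    have h1 : π (Prod.fst ⁻¹' (msupport μ)ᶜ) = 0 := by
      rw [← Measure.map_apply measurable_fst hmSμ.compl, hfst]
      exact measure_compl_msupport μ
    have h2 : π (Prod.snd ⁻¹' (msupport ν)ᶜ) = 0 := by
      rw [← Measure.map_apply measurable_snd hmSν.compl, hsnd]
      exact measure_compl_msupport ν
    have hsub : (msupport μ ×ˢ msupport ν)ᶜ ⊆
        Prod.fst ⁻¹' (msupport μ)ᶜ ∪ Prod.snd ⁻¹' (msupport ν)ᶜ := by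
      intro p hp
      rw [mem_compl_iff, mem_prod] at hp
      exact not_and_or.1 hp
    refine measure_mono_null hsub ?_
    rw [← nonpos_iff_eq_zero]
    refine (measure_union_le _ _).trans ?_
    rw [h1, h2, add_zero]
  have hS'one : π S' = 1 := by
    refine le_antisymm prob_le_one ?_
    calc (1 : ℝ≥0∞) = π S := hπSone.symm
      _ ≤ π (S' ∪ (msupport μ ×ˢ msupport ν)ᶜ) := by
          refine measure_mono fun p hp => ?_
          by_cases h : p ∈ msupport μ ×ˢ msupport ν
          · exact Or.inl ⟨hp, h⟩
          · exact Or.inr h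
      _ ≤ π S' + π ((msupport μ ×ˢ msupport ν)ᶜ) := measure_union_le _ _
      _ = π S' := by rw [hrectc, add_zero]
  have hS'c0 : π S'ᶜ = 0 := (prob_compl_eq_zero_iff hS'm).2 hS'one
  have hkey : ∀ p ∈ S', ∀ q ∈ S', dist p.2 q.2 ≤ dist p.1 q.1 := by
    intro p hp q hq
    exact disSucc_pointwise hdis p hp.1 q hq.1
  have huniq : ∀ {x : X} {y y' : Y}, (x, y) ∈ S' → (x, y') ∈ S' → y = y' := by
    intro x y y' h1 h2
    have := hkey (x, y) h1 (x, y') h2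
    simp only [dist_self] at this
    exact dist_le_zero.1 this
  -- every point of the support of μ lies under S'
  have hTsupp : ∀ x ∈ msupport μ, ∃ y, (x, y) ∈ S' := by
    intro x hx
    have hxc : x ∈ closure {x' | ∃ y, (x', y) ∈ S'} := by
      rw [_root_.mem_closure_iff]
      intro o ho hxo
      have hμo : 0 < μ o := hx o ho hxo
      have hπo : μ o = π (Prod.fst ⁻¹' o) := by
        rw [← hfst, Measure.map_apply measurable_fst ho.measurableSet]
      have hne : π (Prod.fst ⁻¹' o ∩ S') ≠ 0 := by
        intro h0
        have hle : π (Prod.fst ⁻¹' o) ≤ π (Prod.fst ⁻¹' o ∩ S') + π S'ᶜ := by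
          refine (measure_mono fun p hp => ?_).trans (measure_union_le _ _)
          by_cases h : p ∈ S'
          · exact Or.inl ⟨hp, h⟩
          · exact Or.inr h
        rw [h0, hS'c0, add_zero, nonpos_iff_eq_zero] at hle
        rw [hπo, hle] at hμo
        exact lt_irrefl _ hμo
      obtain ⟨p, hp⟩ := nonempty_of_measure_ne_zero hne
      exact ⟨p.1, hp.1, p.2, by rw [Prod.mk.eta]; exact hp.2⟩
    obtain ⟨u, hu, hulim⟩ := mem_closure_iff_seq_limit.1 hxc
    choose v hv using hu
    have hvc : CauchySeq v := by
      rw [Metric.cauchySeq_iff]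
      have huc := hulim.cauchySeq
      rw [Metric.cauchySeq_iff] at huc
      intro ε hε
      obtain ⟨N, hN⟩ := huc ε hε
      refine ⟨N, fun m hm n hn => lt_of_le_of_lt ?_ (hN m hm n hn)⟩
      simpa using hkey (u m, v m) (hv m) (u n, v n) (hv n)
    obtain ⟨y, hy⟩ := cauchySeq_tendsto_of_complete hvc
    refine ⟨y, hS'cl.mem_of_tendsto (hulim.prodMk_nhds hy) (Eventually.of_forall hv)⟩
  have hexists : ∀ x : msupport μ, ∃ y, ((x : X), y) ∈ S' := fun x => hTsupp x x.2
  set f : msupport μ → msupport ν :=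
    fun x => ⟨(hexists x).choose, (hexists x).choose_spec.2.2⟩ with hfdef
  have hfS : ∀ x : msupport μ, ((x : X), (f x : Y)) ∈ S' := fun x => (hexists x).choose_spec
  have hflip : LipschitzWith 1 f := by
    refine LipschitzWith.of_dist_le_mul fun x x' => ?_
    rw [NNReal.coe_one, one_mul, Subtype.dist_eq, Subtype.dist_eq]
    simpa using hkey _ (hfS x) _ (hfS x')
  refine ⟨f, hflip, fun A hA => ?_⟩
  set B : Set X := Subtype.val '' ((fun x => (f x : Y)) ⁻¹' A) with hBdef
  have hBm : MeasurableSet B :=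
    (MeasurableEmbedding.subtype_coe hmSμ).measurableSet_image'
      ((continuous_subtype_val.comp hflip.continuous).measurable hA)
  have hsets : Prod.snd ⁻¹' A ∩ S' = Prod.fst ⁻¹' B ∩ S' := by
    ext p
    simp only [mem_inter_iff, mem_preimage, and_congr_left_iff]
    intro hp
    have hp1 : p.1 ∈ msupport μ := hp.2.1
    have hpS' : (p.1, p.2) ∈ S' := by rw [Prod.mk.eta]; exact hp
    have hfp : (f ⟨p.1, hp1⟩ : Y) = p.2 := huniq (hfS ⟨p.1, hp1⟩) hpS'
    constructor
    · intro hpa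
      exact ⟨⟨p.1, hp1⟩, by rw [mem_preimage, hfp]; exact hpa, rfl⟩
    · rintro ⟨z, hz, hzval⟩
      have hzz : z = ⟨p.1, hp1⟩ := Subtype.ext hzval
      rw [hzz] at hz
      rw [← hfp]
      exact hz
  have hfull : ∀ t : Set (X × Y), π (t ∩ S') = π t := by
    intro t
    refine le_antisymm (measure_mono inter_subset_left) ?_
    calc π t ≤ π (t ∩ S') + π S'ᶜ := by
          refine (measure_mono fun p hp => ?_).trans (measure_union_le _ _)
          by_cases h : p ∈ S'
          · exact Or.inl ⟨hp, h⟩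
          · exact Or.inr h
      _ = π (t ∩ S') := by rw [hS'c0, add_zero]
  calc μ B = π (Prod.fst ⁻¹' B) := by
        rw [← hfst, Measure.map_apply measurable_fst hBm]
    _ = π (Prod.fst ⁻¹' B ∩ S') := (hfull _).symm
    _ = π (Prod.snd ⁻¹' A ∩ S') := by rw [hsets]
    _ = π (Prod.snd ⁻¹' A) := hfull _
    _ = ν A := by rw [← hsnd, Measure.map_apply measurable_snd hA]

/-- `X ≻ Y` iff `X ≻₀ Y`. -/
theorem lipOrder_iff_lipDomE_zero {X Y : Type*} [MetricSpace X] [CompleteSpace X]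
    [TopologicalSpace.SeparableSpace X] [MeasurableSpace X] [BorelSpace X]
    [MetricSpace Y] [CompleteSpace Y] [TopologicalSpace.SeparableSpace Y]
    [MeasurableSpace Y] [BorelSpace Y]
    (μ : Measure X) (ν : Measure Y) [IsProbabilityMeasure μ] [IsProbabilityMeasure ν] :
    LipOrder μ ν ↔ LipDomE μ ν 0 :=
  ⟨lipOrder_aux_forward μ ν, lipOrder_aux_backward μ ν⟩
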